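/- Consider a first-order ('pure linearized') rigging transformation with background gauge fields λ = 1, W = 0, Z = 0 and first-order gauge fields δλ ∈ ℝ, δW ∈ ℝ, δZ ∈ V* satisfying n2·δW + δZ(n) = 0. The transformed first-order rigging data is δl' = δl + δλ·l + δZ and δl2' = δl2 + 2 l2·δλ + 2 δW. Writing Δδl = δl' − δl and Δδl2 = δl2' − δl2, the map (δλ, δW, δZ) ↦ (Δδl, Δδl2) is invertible, with inverse δλ = (n2/2)·Δδl2 + Δδl(n), δW = (1/2)(1 − n2·l2)·Δδl2 − l2·Δδl(n), and δZ = Δδl − Δδl(n)·l − (n2/2)·Δδl2·l. -/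
import Mathlib

/-- Gauge inversion to first order (Prop. 5.8 of Nolan–Reina–Sousa): for a pure first-order
rigging transformation (background λ = 1, W = 0, Z = 0) with first-order gauge fields
(dlam = δλ, dW = δW, dZ = δZ) constrained by n2·δW + δZ(n) = 0, the map
(δλ, δW, δZ) ↦ (Δδl, Δδl2), Δδl = δλ·l + δZ, Δδl2 = 2 l2 δλ + 2 δW,
is inverted by the stated formulas. -/
theorem stmt_5
    (V : Type*) [AddCommGroup V] [Module ℝ V] [FiniteDimensional ℝ V]
    (h : V →ₗ[ℝ] V →ₗ[ℝ] ℝ) (hsymm : ∀ X Y : V, h X Y = h Y X)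
    (l : Module.Dual ℝ V) (l2 : ℝ)
    (P : Module.Dual ℝ V →ₗ[ℝ] Module.Dual ℝ V →ₗ[ℝ] ℝ)
    (Psymm : ∀ ω χ : Module.Dual ℝ V, P ω χ = P χ ω)
    (n : V) (n2 : ℝ)
    (c1 : ∀ (ω : Module.Dual ℝ V) (X : V), P ω (h X) + ω n * l X = ω X)
    (c2 : ∀ ω : Module.Dual ℝ V, P ω l + l2 * ω n = 0)
    (c3 : l n + n2 * l2 = 1)
    (c4 : ∀ X : V, h n X + n2 * l X = 0)
    (dlam dW : ℝ) (dZ : Module.Dual ℝ V)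
    (hc : n2 * dW + dZ n = 0) :
    let Δδl : Module.Dual ℝ V := dlam • l + dZ
    let Δδl2 : ℝ := 2 * l2 * dlam + 2 * dW
    (dlam = n2 / 2 * Δδl2 + Δδl n) ∧
    (dW = 1 / 2 * (1 - n2 * l2) * Δδl2 - l2 * Δδl n) ∧
    (dZ = Δδl - Δδl n • l - (n2 / 2 * Δδl2) • l) := by
  intro Δδl Δδl2
  have hln : l n = 1 - n2 * l2 := by linarith
  have hZn : dZ n = -(n2 * dW) := by linarith
  have hΔn : Δδl n = dlam * (1 - n2 * l2) - n2 * dW := by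
    simp [Δδl, hln, hZn]; ring
  refine ⟨by simp [Δδl2, hΔn]; ring, by simp [Δδl2, hΔn]; ring, ?_⟩
  ext X
  simp [Δδl, Δδl2, hΔn]
  ring
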